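/- Let G be a graph, C a longest cycle in G, and P = x→y a longest path in G∖C of length p̄ ≥ 0 with N_C(x) = N_C(y), |N_C(x)| ≥ 2. If for two distinct elementary segments I_a, I_b all intermediate paths are edges and among them there exist two vertex-disjoint (independent) intermediate edges, then |I_a| + |I_b| ≥ 2p̄ + 8. -/

import Mathlib

open SimpleGraph

namespace ToughPaper

variable {V : Type*}

/-- Number of connected components of the subgraph induced on the complement of `S`. -/
noncomputable def numComp (G : SimpleGraph V) (S : Set V) : ℕ :=
  Nat.card (G.induce Sᶜ).ConnectedComponent

/-- The toughness of `G` is greater than 1: `|S| > s(G∖S)` for every cutset `S`. -/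
def ToughGtOne [Fintype V] (G : SimpleGraph V) : Prop :=
  ∀ S : Finset V, 1 < numComp G ↑S → numComp G ↑S < S.card

/-- The toughness of `G` is at most 1: some cutset `S` has `|S| ≤ s(G∖S)`. -/
def ToughLeOne [Fintype V] (G : SimpleGraph V) : Prop :=
  ∃ S : Finset V, 1 < numComp G ↑S ∧ S.card ≤ numComp G ↑S

/-- `G` is `k`-connected: more than `k` vertices and no cutset of size `< k`. -/
def KConnected [Fintype V] (k : ℕ) (G : SimpleGraph V) : Prop :=
  k < Fintype.card V ∧ ∀ S : Finset V, S.card < k → (G.induce (↑S : Set V)ᶜ).Connected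

/-- The (vertex) connectivity `κ(G)`. -/
noncomputable def conn [Fintype V] (G : SimpleGraph V) : ℕ :=
  sSup {k | KConnected k G}

/-- `C` is a longest cycle in `G`. -/
def IsLongestCycle (G : SimpleGraph V) {v : V} (C : G.Walk v v) : Prop :=
  C.IsCycle ∧ ∀ (u : V) (D : G.Walk u u), D.IsCycle → D.length ≤ C.length

/-- `P` is a longest path among paths of `G` avoiding the vertex list `W`
(i.e. a longest path of `G ∖ W`). -/
def IsLongestPathOff (G : SimpleGraph V) (W : List V) {x y : V} (P : G.Walk x y) : Prop :=
  P.IsPath ∧ (∀ u ∈ P.support, u ∉ W) ∧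
  ∀ (a b : V) (Q : G.Walk a b), Q.IsPath → (∀ u ∈ Q.support, u ∉ W) → Q.length ≤ P.length

/-- The neighbors of `x` lying on the vertex list `W` (e.g. `N_C(x)` for `W = C.support`). -/
def nbrsOn (G : SimpleGraph V) (W : List V) (x : V) : Set V :=
  {u | u ∈ W ∧ G.Adj x u}

/-- The number of edges of the oriented arc of the closed walk `C` from `a` to `b`. -/
noncomputable def arcLen [DecidableEq V] {G : SimpleGraph V} {v : V}
    (C : G.Walk v v) (a b : V) : ℕ :=
  if h : ∃ (ha : a ∈ C.support), b ∈ (C.rotate a ha).support then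
    ((C.rotate a h.choose).takeUntil b h.choose_spec).length
  else 0

/-- The vertices of the oriented arc of `C` from `a` to `b`. -/
noncomputable def arcSupport [DecidableEq V] {G : SimpleGraph V} {v : V}
    (C : G.Walk v v) (a b : V) : List V :=
  if h : ∃ (ha : a ∈ C.support), b ∈ (C.rotate a ha).support then
    ((C.rotate a h.choose).takeUntil b h.choose_spec).support
  else []

/-- The successor of `a` on the oriented closed walk `C`. -/
noncomputable def cycSucc [DecidableEq V] {G : SimpleGraph V} {v : V}
    (C : G.Walk v v) (a : V) : V :=
  if h : a ∈ C.support then (C.rotate a h).getVert 1 else a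

/-- The predecessor of `a` on the oriented closed walk `C`. -/
noncomputable def cycPred [DecidableEq V] {G : SimpleGraph V} {v : V}
    (C : G.Walk v v) (a : V) : V :=
  if h : a ∈ C.support then (C.rotate a h).getVert ((C.rotate a h).length - 1) else a

/-- `a` and `b` are consecutive elements of `N` on `C`; the arc `a→b` is then an
elementary segment created by `N`. -/
def ConsecOnC [DecidableEq V] {G : SimpleGraph V} {v : V}
    (C : G.Walk v v) (N : Set V) (a b : V) : Prop :=
  a ∈ N ∧ b ∈ N ∧ a ≠ b ∧ ∀ w ∈ arcSupport C a b, w ≠ a → w ≠ b → w ∉ N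

/-- `u` is an interior vertex of the arc `a→b` of `C`. -/
def InteriorArc [DecidableEq V] {G : SimpleGraph V} {v : V}
    (C : G.Walk v v) (a b : V) (u : V) : Prop :=
  u ∈ arcSupport C a b ∧ u ≠ a ∧ u ≠ b

/-- `L` is an intermediate path between the elementary segments `a₁→b₁` and `a₂→b₂`
(created by `N` on `C`), relative to the path with vertex list `Psupp`. -/
def IsInterPath [DecidableEq V] (G : SimpleGraph V) {v z w : V} (C : G.Walk v v)
    (Psupp : List V) (N : Set V) (a₁ b₁ a₂ b₂ : V) (L : G.Walk z w) : Prop :=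
  ConsecOnC C N a₁ b₁ ∧ ConsecOnC C N a₂ b₂ ∧ a₁ ≠ a₂ ∧
  L.IsPath ∧ 0 < L.length ∧ InteriorArc C a₁ b₁ z ∧ InteriorArc C a₂ b₂ w ∧
  ∀ u ∈ L.support, (u ∈ C.support ∨ u ∈ Psupp) → u = z ∨ u = w

/-- Vertex type of the Petersen graph: 2-element subsets of a 5-element set. -/
def PetersenV := {s : Finset (Fin 5) // s.card = 2}

instance : Fintype PetersenV := inferInstanceAs (Fintype {s : Finset (Fin 5) // s.card = 2})
instance : DecidableEq PetersenV := inferInstanceAs (DecidableEq {s : Finset (Fin 5) // s.card = 2})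

/-- The Petersen graph as the Kneser graph `K(5,2)`. -/
def petersen : SimpleGraph PetersenV where
  Adj a b := Disjoint a.1 b.1 ∧ a ≠ b
  symm := ⟨fun a b h => ⟨h.1.symm, h.2.symm⟩⟩
  loopless := ⟨fun a h => h.2 rfl⟩

instance : DecidableRel petersen.Adj :=
  fun a b => inferInstanceAs (Decidable (Disjoint a.1 b.1 ∧ a ≠ b))




section Toolkit
open Walk
variable [DecidableEq V] {G : SimpleGraph V} {u v w a b : V}

lemma takeUntil_start (p : G.Walk u v) (h : u ∈ p.support) : p.takeUntil u h = Walk.nil := by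
  cases p <;> simp [Walk.takeUntil]

lemma dropUntil_start (p : G.Walk u v) (h : u ∈ p.support) : p.dropUntil u h = p := by
  cases p <;> simp [Walk.dropUntil]

lemma takeUntil_append_left (p : G.Walk u v) (q : G.Walk v w) (h : a ∈ p.support)
    (h' : a ∈ (p.append q).support) : (p.append q).takeUntil a h' = p.takeUntil a h := by
  induction p with
  | nil =>
    rw [mem_support_nil_iff] at h; subst h
    rw [takeUntil_start, takeUntil_start]
  | @cons s x y r p ih =>
    by_cases hs : s = a
    · subst hs
      rw [takeUntil_start, takeUntil_start]
    · have h2 : a ∈ p.support := by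
        cases h with
        | head => exact absurd rfl hs
        | tail _ h => exact h
      simp only [cons_append, Walk.takeUntil, dif_neg hs]
      congr 1
      apply ih

lemma dropUntil_append_left (p : G.Walk u v) (q : G.Walk v w) (h : a ∈ p.support)
    (h' : a ∈ (p.append q).support) : (p.append q).dropUntil a h' = (p.dropUntil a h).append q := by
  induction p with
  | nil =>
    rw [mem_support_nil_iff] at h; subst h
    rw [dropUntil_start, dropUntil_start]
  | @cons s x y r p ih =>
    by_cases hs : s = a
    · subst hs
      rw [dropUntil_start, dropUntil_start]
    · have h2 : a ∈ p.support := by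
        cases h with
        | head => exact absurd rfl hs
        | tail _ h => exact h
      simp only [cons_append, Walk.dropUntil, dif_neg hs]
      apply ih

lemma takeUntil_append_right (p : G.Walk u v) (q : G.Walk v w) (hn : a ∉ p.support)
    (h : a ∈ q.support) (h' : a ∈ (p.append q).support) :
    (p.append q).takeUntil a h' = p.append (q.takeUntil a h) := by
  induction p with
  | nil => rfl
  | @cons s x y r p ih =>
    have hs : s ≠ a := fun hsa => hn (hsa ▸ start_mem_support _)
    have hn2 : a ∉ p.support := fun h2 => hn (List.mem_cons_of_mem _ h2)
    simp only [cons_append, Walk.takeUntil, dif_neg hs]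
    congr 1
    apply ih <;> exact hn2

lemma dropUntil_append_right (p : G.Walk u v) (q : G.Walk v w) (hn : a ∉ p.support)
    (h : a ∈ q.support) (h' : a ∈ (p.append q).support) :
    (p.append q).dropUntil a h' = q.dropUntil a h := by
  induction p with
  | nil => rfl
  | @cons s x y r p ih =>
    have hs : s ≠ a := fun hsa => hn (hsa ▸ start_mem_support _)
    have hn2 : a ∉ p.support := fun h2 => hn (List.mem_cons_of_mem _ h2)
    simp only [cons_append, Walk.dropUntil, dif_neg hs]
    apply ih <;> exact hn2

lemma takeUntil_end (p : G.Walk u v) (hnd : p.support.Nodup) (h : v ∈ p.support) :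
    p.takeUntil v h = p := by
  induction p with
  | nil => exact takeUntil_start _ _
  | @cons s x y r p ih =>
    have hs : s ≠ y := by
      intro hsy; subst hsy
      simp only [support_cons, List.nodup_cons] at hnd
      exact hnd.1 (end_mem_support p)
    simp only [Walk.takeUntil, dif_neg hs]
    congr 1
    apply ih
    simp only [support_cons, List.nodup_cons] at hnd
    exact hnd.2

lemma dropUntil_end (p : G.Walk u v) (hnd : p.support.Nodup) (h : v ∈ p.support) :
    p.dropUntil v h = Walk.nil := by
  have hts := p.take_spec h
  rw [takeUntil_end p hnd h] at hts
  have hl := congr_arg Walk.length hts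
  rw [length_append] at hl
  have hz : (p.dropUntil v h).length = 0 := by omega
  cases hq : p.dropUntil v h with
  | nil => rfl
  | cons r q => rw [hq] at hz; simp at hz

lemma length_rotate' (c : G.Walk v v) (h : u ∈ c.support) :
    (c.rotate u h).length = c.length := by
  have hts := congr_arg Walk.length (c.take_spec h)
  rw [length_append] at hts
  rw [Walk.rotate, length_append]
  omega

lemma rotate_start (c : G.Walk v v) (h : v ∈ c.support) : c.rotate v h = c := by
  rw [Walk.rotate, takeUntil_start, dropUntil_start, append_nil]

lemma mem_tail_of_mem_support_closed {c : G.Walk v v} (hne : c.length ≠ 0) (h : u ∈ c.support) :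
    u ∈ c.support.tail := by
  cases c with
  | nil => simp at hne
  | cons r q =>
    simp only [support_cons, List.tail_cons]
    rcases List.mem_cons.1 (by simpa [support_cons] using h) with rfl | h2
    · exact end_mem_support q
    · exact h2

lemma mem_support_rotate_iff (c : G.Walk v v) (h : a ∈ c.support) (hne : c.length ≠ 0) :
    u ∈ (c.rotate a h).support ↔ u ∈ c.support := by
  have hrot := support_rotate c a h
  have hlen : (c.rotate a h).length ≠ 0 := by rwa [length_rotate']
  constructor
  · intro hu
    have := hrot.perm.mem_iff.1 (mem_tail_of_mem_support_closed hlen hu)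
    exact List.mem_of_mem_tail this
  · intro hu
    have := hrot.perm.mem_iff.2 (mem_tail_of_mem_support_closed hne hu)
    exact List.mem_of_mem_tail this


lemma takeUntil_append_end (p : G.Walk u v) (q : G.Walk v w) (hnd : p.support.Nodup)
    (h : v ∈ (p.append q).support) : (p.append q).takeUntil v h = p := by
  rw [takeUntil_append_left p q (end_mem_support p), takeUntil_end p hnd]

lemma dropUntil_append_end (p : G.Walk u v) (q : G.Walk v w) (hnd : p.support.Nodup)
    (h : v ∈ (p.append q).support) : (p.append q).dropUntil v h = q := by
  rw [dropUntil_append_left p q (end_mem_support p), dropUntil_end p hnd, nil_append]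

lemma takeUntil_congr {p q : G.Walk u v} (h : p = q) (ha : a ∈ p.support) :
    p.takeUntil a ha = q.takeUntil a (h ▸ ha) := by subst h; rfl

lemma dropUntil_congr {p q : G.Walk u v} (h : p = q) (ha : a ∈ p.support) :
    p.dropUntil a ha = q.dropUntil a (h ▸ ha) := by subst h; rfl

lemma rotate_congr {c c' : G.Walk v v} (h : c = c') (hb : b ∈ c.support) :
    c.rotate b hb = c'.rotate b (h ▸ hb) := by subst h; rfl

lemma rotate_append_swap {a v b : V} (P : G.Walk v a) (Q : G.Walk a v) (hav : a ≠ v)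
    (hnd : (P.append Q).support.tail.Nodup) (hb : b ∈ (Q.append P).support)
    (hb' : b ∈ (P.append Q).support) :
    (Q.append P).rotate b hb = (P.append Q).rotate b hb' := by
  have hvQ : v ∈ Q.support.tail := end_mem_tail_support_of_ne hav Q
  have haP : a ∈ P.support.tail := end_mem_tail_support_of_ne (Ne.symm hav) P
  rw [tail_support_append] at hnd
  have ndPtl := hnd.of_append_left
  have ndQtl := hnd.of_append_right
  have hdisj := List.disjoint_of_nodup_append hnd
  have ndP : P.support.Nodup := by
    rw [support_eq_cons, List.nodup_cons]
    exact ⟨fun hv => hdisj hv hvQ, ndPtl⟩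
  have ndQ : Q.support.Nodup := by
    rw [support_eq_cons, List.nodup_cons]
    exact ⟨fun hv => hdisj haP hv, ndQtl⟩
  by_cases hba : b = a
  · subst hba
    rw [rotate_start]
    rw [Walk.rotate]
    have hbP : b ∈ P.support := end_mem_support P
    rw [takeUntil_append_left P Q hbP, dropUntil_append_left P Q hbP,
      takeUntil_end P ndP, dropUntil_end P ndP]
    rfl
  · by_cases hbv : b = v
    · subst hbv
      have hbQ : b ∈ Q.support := end_mem_support Q
      rw [rotate_start (P.append Q) hb', Walk.rotate,
        takeUntil_append_left Q P hbQ, dropUntil_append_left Q P hbQ,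
        takeUntil_end Q ndQ, dropUntil_end Q ndQ]
      rfl
    · by_cases hbP : b ∈ P.support
      · have hbPtl : b ∈ P.support.tail := by
          rw [support_eq_cons] at hbP
          rcases List.mem_cons.1 hbP with rfl | h2
          · exact absurd rfl hbv
          · exact h2
        have hbQn : b ∉ Q.support := by
          rw [support_eq_cons]
          intro hmem
          rcases List.mem_cons.1 hmem with rfl | h2
          · exact hba rfl
          · exact hdisj hbPtl h2
        rw [Walk.rotate, Walk.rotate,
          takeUntil_append_right Q P hbQn hbP, dropUntil_append_right Q P hbQn hbP,
          takeUntil_append_left P Q hbP, dropUntil_append_left P Q hbP,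
          append_assoc]
      · have hbQ : b ∈ Q.support := by
          rcases (mem_support_append_iff Q P).1 hb with h2 | h2
          · exact h2
          · exact absurd h2 hbP
        rw [Walk.rotate, Walk.rotate,
          takeUntil_append_left Q P hbQ, dropUntil_append_left Q P hbQ,
          takeUntil_append_right P Q hbP hbQ, dropUntil_append_right P Q hbP hbQ,
          append_assoc]

lemma rotate_rotate {v a b : V} {c : G.Walk v v} (hnd : c.support.tail.Nodup)
    (ha : a ∈ c.support) (hb : b ∈ c.support) (hb' : b ∈ (c.rotate a ha).support) :
    (c.rotate a ha).rotate b hb' = c.rotate b hb := by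
  by_cases hav : a = v
  · subst hav
    rw [rotate_congr (rotate_start c ha) hb']
  · have hrw : c.rotate a ha = (c.dropUntil a ha).append (c.takeUntil a ha) := rfl
    have hts : (c.takeUntil a ha).append (c.dropUntil a ha) = c := take_spec c ha
    rw [rotate_congr hrw hb', rotate_congr hts.symm hb]
    exact rotate_append_swap (c.takeUntil a ha) (c.dropUntil a ha) hav
      (by rw [hts]; exact hnd) _ _

lemma key_ineq {v x y α β : V} {C : G.Walk v v} {P : G.Walk x y}
    (hC : IsLongestCycle G C) (hPp : P.IsPath) (hPoff : ∀ u ∈ P.support, u ∉ C.support)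
    (hxα : G.Adj x α) (hyβ : G.Adj y β) (hαβ : α ≠ β)
    (D : G.Walk α β) (hD : D.IsPath) (hDsub : ∀ u ∈ D.support, u ∈ C.support) :
    D.length + P.length + 2 ≤ C.length := by
  have hxC : x ∉ C.support := hPoff x P.start_mem_support
  have inner : G.Walk α x := D.append (Walk.cons hyβ.symm P.reverse)
  have hinner_supp : (D.append (Walk.cons hyβ.symm P.reverse)).support
      = D.support ++ P.reverse.support := by
    rw [support_append, support_cons, List.tail_cons]
  have hinner_path : (D.append (Walk.cons hyβ.symm P.reverse)).IsPath := by
    apply Walk.IsPath.mk'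
    rw [hinner_supp]
    refine List.Nodup.append hD.support_nodup hPp.reverse.support_nodup ?_
    intro u huD huP
    rw [support_reverse, List.mem_reverse] at huP
    exact hPoff u huP (hDsub u huD)
  have hedge : s(x, α) ∉ (D.append (Walk.cons hyβ.symm P.reverse)).edges := by
    intro hmem
    rw [edges_append] at hmem
    rcases List.mem_append.1 hmem with hmem | hmem
    · exact hxC (hDsub x (fst_mem_support_of_mem_edges D hmem))
    · rw [edges_cons] at hmem
      rcases List.mem_cons.1 hmem with heq | hmem
      · rw [Sym2.eq_iff] at heq
        rcases heq with ⟨rfl, rfl⟩ | ⟨rfl, rfl⟩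
        · exact hxC (hDsub _ D.end_mem_support)
        · exact hαβ rfl
      · have := fst_mem_support_of_mem_edges P.reverse (Sym2.eq_swap ▸ hmem)
        rw [support_reverse, List.mem_reverse] at this
        exact hPoff α this (hDsub α D.start_mem_support)
  have hcyc : (Walk.cons hxα (D.append (Walk.cons hyβ.symm P.reverse))).IsCycle :=
    (Walk.cons_isCycle_iff _ hxα).2 ⟨hinner_path, hedge⟩
  have hle := hC.2 x _ hcyc
  simp only [length_cons, length_append, length_reverse] at hle
  omega

lemma supp_decomp {u v t : V} (p : G.Walk u v) (h : t ∈ p.support) :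
    p.support = (p.takeUntil t h).support ++ (p.dropUntil t h).support.tail := by
  conv_lhs => rw [← take_spec p h]
  rw [support_append]

lemma start_not_mem_dropUntil_of_ne {u v t : V} {p : G.Walk u v} (hp : p.IsPath)
    (h : t ∈ p.support) (hne : t ≠ u) : u ∉ (p.dropUntil t h).support := by
  intro hu
  have hd := hp.support_nodup
  rw [supp_decomp p h] at hd
  have hdisj := List.disjoint_of_nodup_append hd
  rw [support_eq_cons] at hu
  rcases List.mem_cons.1 hu with heq | htl
  · exact hne heq.symm
  · exact hdisj ((p.takeUntil t h).start_mem_support) htl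

lemma end_not_mem_takeUntil_of_ne {u v t : V} {p : G.Walk u v} (hp : p.IsPath)
    (h : t ∈ p.support) (hne : t ≠ v) : v ∉ (p.takeUntil t h).support := by
  intro hv
  have hd := hp.support_nodup
  rw [supp_decomp p h] at hd
  have hdisj := List.disjoint_of_nodup_append hd
  exact hdisj hv (end_mem_tail_support_of_ne hne (p.dropUntil t h))

lemma before_or {u v z₁ z₂ : V} {p : G.Walk u v} (hp : p.IsPath)
    (h₁ : z₁ ∈ p.support) (h₂ : z₂ ∈ p.support) :
    z₂ ∈ (p.dropUntil z₁ h₁).support ∨ z₁ ∈ (p.dropUntil z₂ h₂).support := by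
  by_cases hc : z₂ ∈ (p.dropUntil z₁ h₁).support
  · exact Or.inl hc
  · right
    have hzT : z₂ ∈ (p.takeUntil z₁ h₁).support := by
      have h₂' := h₂
      rw [← take_spec p h₁, mem_support_append_iff] at h₂'
      exact h₂'.resolve_right hc
    have hEq : ((p.takeUntil z₁ h₁).takeUntil z₂ hzT).append
        (((p.takeUntil z₁ h₁).dropUntil z₂ hzT).append (p.dropUntil z₁ h₁)) = p := by
      rw [Walk.append_assoc, take_spec, take_spec]
    rw [dropUntil_congr hEq.symm h₂]
    have hmem : z₂ ∈ ((p.takeUntil z₁ h₁).takeUntil z₂ hzT).support := end_mem_support _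
    rw [dropUntil_append_left _ _ hmem,
      dropUntil_end _ ((hp.takeUntil h₁).takeUntil hzT).support_nodup, nil_append,
      mem_support_append_iff]
    exact Or.inl (end_mem_support _)

lemma path_append {α β γ : V} {p : G.Walk α β} {q : G.Walk β γ} (hp : p.IsPath) (hq : q.IsPath)
    (hint : ∀ t, t ∈ p.support → t ∈ q.support → t = β) : (p.append q).IsPath := by
  apply Walk.IsPath.mk'
  rw [support_append]
  have hqnd := hq.support_nodup
  rw [support_eq_cons, List.nodup_cons] at hqnd
  refine List.Nodup.append hp.support_nodup hqnd.2 ?_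
  intro t htp htq
  have h1 := hint t htp (List.mem_of_mem_tail htq)
  subst h1
  exact hqnd.1 htq

lemma build_ineq {v x y a a' b b' u u' ze zl : V} {C : G.Walk v v} {P : G.Walk x y}
    (hC : IsLongestCycle G C) (hPp : P.IsPath) (hPoff : ∀ t ∈ P.support, t ∉ C.support)
    (hxa' : G.Adj x a') (hya : G.Adj y a)
    (A : G.Walk a a') (Mw : G.Walk a' b) (B : G.Walk b b') (Ow : G.Walk b' a)
    (haa' : a ≠ a') (hbb' : b ≠ b')
    (hrot : ∃ h : a ∈ C.support, A.append (Mw.append (B.append Ow)) = C.rotate a h)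
    (hu : u ∈ B.support) (hub : u ≠ b) (hub' : u ≠ b')
    (hu' : u' ∈ (B.dropUntil u hu).support) (huu' : u ≠ u') (hu'b' : u' ≠ b')
    (Amid : G.Walk ze zl) (hAmidp : Amid.IsPath)
    (hAsub : ∀ t ∈ Amid.support, t ∈ A.support)
    (hAa : a ∉ Amid.support) (hAa' : a' ∉ Amid.support)
    (hadj1 : G.Adj u ze) (hadj2 : G.Adj zl u') :
    P.length + 4 + Amid.length ≤ A.length + ((B.dropUntil u hu).takeUntil u' hu').length := by
  classical
  obtain ⟨haC, hCeq⟩ := hrot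
  have hClen0 : C.length ≠ 0 := fun h0 => hC.1.not_nil (nil_iff_length_eq.2 h0)
  have hnd : (A.append (Mw.append (B.append Ow))).support.tail.Nodup := by
    rw [hCeq]; exact (hC.1.rotate haC).support_nodup
  have htaileq : (A.append (Mw.append (B.append Ow))).support.tail
      = A.support.tail ++ (Mw.support.tail ++ (B.support.tail ++ Ow.support.tail)) := by
    simp only [tail_support_append]
  rw [htaileq] at hnd
  obtain ⟨ndA, hnd2⟩ := List.nodup_append'.1 hnd
  obtain ⟨ndM, hnd3, dM⟩ := List.nodup_append'.1 hnd2.1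
  obtain ⟨ndB, ndO, dBO⟩ := List.nodup_append'.1 hnd3
  have dA := hnd2.2
  have dAM : ∀ t, t ∈ A.support.tail → t ∈ Mw.support.tail → False :=
    fun t h1 h2 => dA h1 (by simp [h2])
  have dAB : ∀ t, t ∈ A.support.tail → t ∈ B.support.tail → False :=
    fun t h1 h2 => dA h1 (by simp [h2])
  have dAO : ∀ t, t ∈ A.support.tail → t ∈ Ow.support.tail → False :=
    fun t h1 h2 => dA h1 (by simp [h2])
  have dMB : ∀ t, t ∈ Mw.support.tail → t ∈ B.support.tail → False :=
    fun t h1 h2 => dM h1 (by simp [h2])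
  have dMO : ∀ t, t ∈ Mw.support.tail → t ∈ Ow.support.tail → False :=
    fun t h1 h2 => dM h1 (by simp [h2])
  have dBO' : ∀ t, t ∈ B.support.tail → t ∈ Ow.support.tail → False :=
    fun t h1 h2 => dBO h1 h2
  -- locations of the junction vertices
  have ha'A : a' ∈ A.support.tail := end_mem_tail_support_of_ne haa' A
  have hb'B : b' ∈ B.support.tail := end_mem_tail_support_of_ne hbb' B
  have hbloc : b = a' ∨ b ∈ Mw.support.tail := by
    rcases eq_or_ne a' b with h | h
    · exact Or.inl h.symm
    · exact Or.inr (end_mem_tail_support_of_ne h Mw)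
  have haloc : a = b' ∨ a ∈ Ow.support.tail := by
    rcases eq_or_ne b' a with h | h
    · exact Or.inl h.symm
    · exact Or.inr (end_mem_tail_support_of_ne h Ow)
  have hanA : a ∉ A.support.tail := by
    intro hmem
    rcases haloc with heq | h
    · exact dAB a hmem (heq ▸ hb'B)
    · exact dAO a hmem h
  have hbnB : b ∉ B.support.tail := by
    intro hmem
    rcases hbloc with heq | h
    · exact dAB b (heq ▸ ha'A) hmem
    · exact dMB b h hmem
  -- piece paths
  have hApath : A.IsPath := by
    apply Walk.IsPath.mk'; rw [support_eq_cons]; exact List.nodup_cons.2 ⟨hanA, ndA⟩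
  have hMpath : Mw.IsPath := by
    apply Walk.IsPath.mk'; rw [support_eq_cons]
    exact List.nodup_cons.2 ⟨fun h => dAM a' ha'A h, ndM⟩
  have hBpath : B.IsPath := by
    apply Walk.IsPath.mk'; rw [support_eq_cons]; exact List.nodup_cons.2 ⟨hbnB, ndB⟩
  have hOpath : Ow.IsPath := by
    apply Walk.IsPath.mk'; rw [support_eq_cons]
    exact List.nodup_cons.2 ⟨fun h => dBO' b' hb'B h, ndO⟩
  -- split B at u and u'
  set Bf := B.takeUntil u hu with hBf
  set Brest := B.dropUntil u hu with hBrest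
  set BM := Brest.takeUntil u' hu' with hBM
  set Bl := Brest.dropUntil u' hu' with hBl
  have hBsplit : Bf.append (BM.append Bl) = B := by
    rw [take_spec, take_spec]
  have hBtl : B.support.tail = Bf.support.tail ++ (BM.support.tail ++ Bl.support.tail) := by
    conv_lhs => rw [← hBsplit]
    simp only [tail_support_append]
  have ndBtl := ndB
  rw [hBtl] at ndBtl
  obtain ⟨ndBf, hndB2⟩ := List.nodup_append'.1 ndBtl
  obtain ⟨ndBM, ndBl, dBMl⟩ := List.nodup_append'.1 hndB2.1
  have dBf := hndB2.2
  have dBfM : ∀ t, t ∈ Bf.support.tail → t ∈ BM.support.tail → False :=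
    fun t h1 h2 => dBf h1 (by simp [h2])
  have dBfl : ∀ t, t ∈ Bf.support.tail → t ∈ Bl.support.tail → False :=
    fun t h1 h2 => dBf h1 (by simp [h2])
  have hBfB : ∀ t, t ∈ Bf.support.tail → t ∈ B.support.tail := by
    intro t h; rw [hBtl]; simp [h]
  have hBMB : ∀ t, t ∈ BM.support.tail → t ∈ B.support.tail := by
    intro t h; rw [hBtl]; simp [h]
  have hBlB : ∀ t, t ∈ Bl.support.tail → t ∈ B.support.tail := by
    intro t h; rw [hBtl]; simp [h]
  have huBf : u ∈ Bf.support.tail := end_mem_tail_support_of_ne (Ne.symm hub) Bf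
  have hu'BM : u' ∈ BM.support.tail := end_mem_tail_support_of_ne huu' BM
  have hb'Bl : b' ∈ Bl.support.tail := end_mem_tail_support_of_ne hu'b' Bl
  have huB : u ∈ B.support.tail := hBfB u huBf
  have hu'B : u' ∈ B.support.tail := hBMB u' hu'BM
  -- Amid zone
  have hAmidtl : ∀ t, t ∈ Amid.support → t ∈ A.support.tail := by
    intro t ht
    have h2 := hAsub t ht
    rw [support_eq_cons] at h2
    rcases List.mem_cons.1 h2 with heq | h3
    · exact absurd (heq ▸ ht) hAa
    · exact h3
  have hzeA : ze ∈ A.support.tail := hAmidtl ze Amid.start_mem_support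
  have hzlA : zl ∈ A.support.tail := hAmidtl zl Amid.end_mem_support
  -- piece paths within B
  have hBfpath : Bf.IsPath := hBpath.takeUntil hu
  have hBrpath : Brest.IsPath := hBpath.dropUntil hu
  have hBlpath : Bl.IsPath := hBrpath.dropUntil hu'
  have hJ1 : (Walk.cons hadj1 Walk.nil : G.Walk u ze).IsPath := by simp [hadj1.ne]
  have hJ2 : (Walk.cons hadj2 Walk.nil : G.Walk zl u').IsPath := by simp [hadj2.ne]
  have hJ1supp : ∀ t, t ∈ (Walk.cons hadj1 (Walk.nil : G.Walk ze ze)).support ↔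
      (t = u ∨ t = ze) := by intro t; simp
  have hJ2supp : ∀ t, t ∈ (Walk.cons hadj2 (Walk.nil : G.Walk u' u')).support ↔
      (t = zl ∨ t = u') := by intro t; simp
  -- membership in Bl implies u' or tail, etc.
  have hmemBl : ∀ t, t ∈ Bl.support → t = u' ∨ t ∈ Bl.support.tail := by
    intro t ht; rw [support_eq_cons] at ht; exact List.mem_cons.1 ht
  have hmemOw : ∀ t, t ∈ Ow.support → t = b' ∨ t ∈ Ow.support.tail := by
    intro t ht; rw [support_eq_cons] at ht; exact List.mem_cons.1 ht
  have hmemBf : ∀ t, t ∈ Bf.support → t = b ∨ t ∈ Bf.support.tail := by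
    intro t ht; rw [support_eq_cons] at ht; exact List.mem_cons.1 ht
  have hmemMw : ∀ t, t ∈ Mw.support → t = a' ∨ t ∈ Mw.support.tail := by
    intro t ht; rw [support_eq_cons] at ht; exact List.mem_cons.1 ht
  -- t in the suffix starting at J2 is in A-zone only if t = zl
  have hP6 : (Bl.append Ow).IsPath := by
    refine path_append hBlpath hOpath ?_
    intro t ht1 ht2
    rcases hmemBl t ht1 with rfl | h1
    · rcases hmemOw t ht2 with h2 | h2
      · exact h2
      · exact absurd h2 (fun h => dBO' t (hBMB t hu'BM) h)
    · rcases hmemOw t ht2 with rfl | h2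
      · rfl
      · exact absurd h2 (fun h => dBO' t (hBlB t h1) h)
  -- any vertex of (Bl.append Ow).support is b-zone or o-zone or equals u'/b'
  have hsuffBlOw : ∀ t, t ∈ (Bl.append Ow).support → t ∈ B.support.tail ∨ t ∈ Ow.support.tail := by
    intro t ht
    rcases (mem_support_append_iff _ _).1 ht with h | h
    · rcases hmemBl t h with rfl | h1
      · exact Or.inl hu'B
      · exact Or.inl (hBlB t h1)
    · rcases hmemOw t h with rfl | h1
      · exact Or.inl hb'B
      · exact Or.inr h1
  have hP5 : ((Walk.cons hadj2 Walk.nil : G.Walk zl u').append (Bl.append Ow)).IsPath := by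
    refine path_append hJ2 hP6 ?_
    intro t ht1 ht2
    rcases (hJ2supp t).1 ht1 with rfl | h1
    · exfalso
      rcases hsuffBlOw t ht2 with h | h
      · exact dAB t hzlA h
      · exact dAO t hzlA h
    · exact h1
  have hsuffP5 : ∀ t, t ∈ ((Walk.cons hadj2 Walk.nil : G.Walk zl u').append (Bl.append Ow)).support →
      t = zl ∨ t ∈ B.support.tail ∨ t ∈ Ow.support.tail := by
    intro t ht
    rcases (mem_support_append_iff _ _).1 ht with h | h
    · rcases (hJ2supp t).1 h with rfl | rfl
      · exact Or.inl rfl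
      · exact Or.inr (Or.inl hu'B)
    · exact Or.inr (hsuffBlOw t h)
  have hP4 : (Amid.append ((Walk.cons hadj2 Walk.nil : G.Walk zl u').append (Bl.append Ow))).IsPath := by
    refine path_append hAmidp hP5 ?_
    intro t ht1 ht2
    have htA := hAmidtl t ht1
    rcases hsuffP5 t ht2 with h | h | h
    · exact h
    · exact absurd htA (fun hh => dAB t hh h)
    · exact absurd htA (fun hh => dAO t hh h)
  have hsuffP4 : ∀ t, t ∈ (Amid.append ((Walk.cons hadj2 Walk.nil : G.Walk zl u').append
      (Bl.append Ow))).support →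
      t ∈ Amid.support ∨ t ∈ B.support.tail ∨ t ∈ Ow.support.tail := by
    intro t ht
    rcases (mem_support_append_iff _ _).1 ht with h | h
    · exact Or.inl h
    · rcases hsuffP5 t h with rfl | h | h
      · exact Or.inl Amid.end_mem_support
      · exact Or.inr (Or.inl h)
      · exact Or.inr (Or.inr h)
  -- u is not in the P4-suffix: u is in Bf-zone
  have hunP4 : ∀ t, t ∈ (Amid.append ((Walk.cons hadj2 Walk.nil : G.Walk zl u').append
      (Bl.append Ow))).support → t = u → False := by
    intro t ht heq
    subst heq
    rcases hsuffP4 t ht with h | h | h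
    · exact dAB t (hAmidtl t h) (hBfB t huBf)
    · -- t = u in B.support.tail : need u not in BM.tail/Bl.tail and u ≠ u', b'
      rcases (mem_support_append_iff _ _).1 ht with hh | hh
      · exact dAB t (hAmidtl t hh) (hBfB t huBf)
      · rcases (mem_support_append_iff _ _).1 hh with hh2 | hh2
        · rcases (hJ2supp t).1 hh2 with rfl | rfl
          · exact dAB t hzlA (hBfB t huBf)
          · exact huu' rfl
        · rcases (mem_support_append_iff _ _).1 hh2 with hh3 | hh3
          · rcases hmemBl t hh3 with rfl | h4
            · exact huu' rfl
            · exact dBfl t huBf h4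
          · rcases hmemOw t hh3 with rfl | h4
            · exact hub' rfl
            · exact dBO' t (hBfB t huBf) h4
    · exact dBO' t (hBfB t huBf) h
  have hP3 : ((Walk.cons hadj1 Walk.nil : G.Walk u ze).append
      (Amid.append ((Walk.cons hadj2 Walk.nil : G.Walk zl u').append (Bl.append Ow)))).IsPath := by
    refine path_append hJ1 hP4 ?_
    intro t ht1 ht2
    rcases (hJ1supp t).1 ht1 with rfl | h1
    · exact absurd ht2 (fun h => hunP4 t h rfl)
    · exact h1
  have hsuffP3 : ∀ t, t ∈ ((Walk.cons hadj1 Walk.nil : G.Walk u ze).append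
      (Amid.append ((Walk.cons hadj2 Walk.nil : G.Walk zl u').append (Bl.append Ow)))).support →
      t = u ∨ t ∈ Amid.support ∨ t ∈ B.support.tail ∨ t ∈ Ow.support.tail := by
    intro t ht
    rcases (mem_support_append_iff _ _).1 ht with h | h
    · rcases (hJ1supp t).1 h with rfl | rfl
      · exact Or.inl rfl
      · exact Or.inr (Or.inl Amid.start_mem_support)
    · exact Or.inr (hsuffP4 t h)
  -- refined: which part of B-zone
  have hsuffP3' : ∀ t, t ∈ ((Walk.cons hadj1 Walk.nil : G.Walk u ze).append
      (Amid.append ((Walk.cons hadj2 Walk.nil : G.Walk zl u').append (Bl.append Ow)))).support →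
      t ∈ Bf.support.tail → t = u := by
    intro t ht htBf
    rcases (mem_support_append_iff _ _).1 ht with h | h
    · rcases (hJ1supp t).1 h with rfl | rfl
      · rfl
      · exact absurd htBf (fun hh => dAB t hzeA (hBfB t hh))
    · exfalso
      rcases (mem_support_append_iff _ _).1 h with hh | hh
      · exact dAB t (hAmidtl t hh) (hBfB t htBf)
      · rcases (mem_support_append_iff _ _).1 hh with hh2 | hh2
        · rcases (hJ2supp t).1 hh2 with rfl | rfl
          · exact dAB t hzlA (hBfB t htBf)
          · exact dBfM t htBf hu'BM
        · rcases (mem_support_append_iff _ _).1 hh2 with hh3 | hh3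
          · rcases hmemBl t hh3 with rfl | h4
            · exact dBfM t htBf hu'BM
            · exact dBfl t htBf h4
          · rcases hmemOw t hh3 with rfl | h4
            · exact dBfl t htBf hb'Bl
            · exact dBO' t (hBfB t htBf) h4
  have hP2 : (Bf.append ((Walk.cons hadj1 Walk.nil : G.Walk u ze).append
      (Amid.append ((Walk.cons hadj2 Walk.nil : G.Walk zl u').append (Bl.append Ow))))).IsPath := by
    refine path_append hBfpath hP3 ?_
    intro t ht1 ht2
    rcases hmemBf t ht1 with rfl | h1
    · -- t = b
      exfalso
      rcases hsuffP3 t ht2 with heq | h | h | h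
      · exact hub heq.symm
      · rcases hbloc with heq | hM
        · exact hAa' (heq ▸ h)
        · exact dAM t (hAmidtl t h) hM
      · exact hbnB h
      · rcases hbloc with heq | hM
        · exact dAO t (heq ▸ ha'A) h
        · exact dMO t hM h
    · exact hsuffP3' t ht2 h1
  have hsuffP2 : ∀ t, t ∈ (Bf.append ((Walk.cons hadj1 Walk.nil : G.Walk u ze).append
      (Amid.append ((Walk.cons hadj2 Walk.nil : G.Walk zl u').append (Bl.append Ow))))).support →
      t = b ∨ t ∈ Amid.support ∨ t ∈ B.support.tail ∨ t ∈ Ow.support.tail := by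
    intro t ht
    rcases (mem_support_append_iff _ _).1 ht with h | h
    · rcases hmemBf t h with rfl | h1
      · exact Or.inl rfl
      · exact Or.inr (Or.inr (Or.inl (hBfB t h1)))
    · rcases hsuffP3 t h with rfl | h | h | h
      · exact Or.inr (Or.inr (Or.inl huB))
      · exact Or.inr (Or.inl h)
      · exact Or.inr (Or.inr (Or.inl h))
      · exact Or.inr (Or.inr (Or.inr h))
  have hDpath : (Mw.append (Bf.append ((Walk.cons hadj1 Walk.nil : G.Walk u ze).append
      (Amid.append ((Walk.cons hadj2 Walk.nil : G.Walk zl u').append (Bl.append Ow)))))).IsPath := by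
    refine path_append hMpath hP2 ?_
    intro t ht1 ht2
    rcases hmemMw t ht1 with rfl | h1
    · -- t = a'
      rcases hsuffP2 t ht2 with heq | h | h | h
      · -- a' = b : fine, the junction is b
        exact heq
      · exact absurd h hAa'
      · exact absurd h (fun hh => dAB t ha'A hh)
      · exact absurd h (fun hh => dAO t ha'A hh)
    · -- t ∈ Mw.support.tail
      rcases hsuffP2 t ht2 with heq | h | h | h
      · exact heq
      · exact absurd h (fun hh => dAM t (hAmidtl t hh) h1)
      · exact absurd h (fun hh => dMB t h1 hh)
      · exact absurd h (fun hh => dMO t h1 hh)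
  -- support of D is inside C
  have hsub : ∀ t, (t ∈ A.support ∨ t ∈ Mw.support ∨ t ∈ B.support ∨ t ∈ Ow.support) →
      t ∈ C.support := by
    intro t ht
    have hmem : t ∈ (A.append (Mw.append (B.append Ow))).support := by
      simp only [mem_support_append_iff]
      tauto
    rw [hCeq] at hmem
    exact (mem_support_rotate_iff C haC hClen0).1 hmem
  have hBtlB : ∀ t, t ∈ B.support.tail → t ∈ B.support := fun t h => List.mem_of_mem_tail h
  have hDsub : ∀ t, t ∈ (Mw.append (Bf.append ((Walk.cons hadj1 Walk.nil : G.Walk u ze).append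
      (Amid.append ((Walk.cons hadj2 Walk.nil : G.Walk zl u').append (Bl.append Ow)))))).support →
      t ∈ C.support := by
    intro t ht
    rcases (mem_support_append_iff _ _).1 ht with h | h
    · exact hsub t (Or.inr (Or.inl h))
    · rcases hsuffP2 t h with rfl | h | h | h
      · exact hsub t (Or.inr (Or.inl Mw.end_mem_support))
      · exact hsub t (Or.inl (hAsub t h))
      · exact hsub t (Or.inr (Or.inr (Or.inl (hBtlB t h))))
      · exact hsub t (Or.inr (Or.inr (Or.inr (List.mem_of_mem_tail h))))
  -- apply the cycle extension inequality
  have hkey := key_ineq hC hPp hPoff hxa' hya (Ne.symm haa') _ hDpath hDsub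
  -- lengths
  have hClen : A.length + (Mw.length + (B.length + Ow.length)) = C.length := by
    have h := congrArg Walk.length hCeq
    rwa [length_rotate', length_append, length_append, length_append] at h
  have hBlen : Bf.length + (BM.length + Bl.length) = B.length := by
    have h := congrArg Walk.length hBsplit
    rwa [length_append, length_append] at h
  have hDlen : (Mw.append (Bf.append ((Walk.cons hadj1 Walk.nil : G.Walk u ze).append
      (Amid.append ((Walk.cons hadj2 Walk.nil : G.Walk zl u').append (Bl.append Ow)))))).length
      = Mw.length + Bf.length + 1 + Amid.length + 1 + Bl.length + Ow.length := by
    simp only [length_append, length_cons, length_nil]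
    omega
  rw [hDlen] at hkey
  omega

end Toolkit

/-- **Lemma 2 (a3).** With `C` a longest cycle, `P = x→y` a longest path in `G ∖ C` of
length `p̄ ≥ 0`, `N_C(x) = N_C(y)`, `|N_C(x)| ≥ 2`: if all intermediate paths between the
distinct elementary segments `I_a` and `I_b` are single edges, among which there are two
independent intermediate edges, then `|I_a| + |I_b| ≥ 2p̄ + 8`. -/
theorem lemma2_a3 {V : Type*} [Fintype V] [DecidableEq V]
    (G : SimpleGraph V) {v x y ξa ξa' ξb ξb' : V}
    (C : G.Walk v v) (P : G.Walk x y)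
    (hC : IsLongestCycle G C) (hP : IsLongestPathOff G C.support P)
    (hN : nbrsOn G C.support x = nbrsOn G C.support y)
    (hcard : 2 ≤ (nbrsOn G C.support x).ncard)
    (ha : ConsecOnC C (nbrsOn G C.support x) ξa ξa')
    (hb : ConsecOnC C (nbrsOn G C.support x) ξb ξb')
    (hab : ξa ≠ ξb)
    (hedges : ∀ (z w : V) (L : G.Walk z w),
      IsInterPath G C P.support (nbrsOn G C.support x) ξa ξa' ξb ξb' L → L.length = 1)
    (hindep : ∃ z₁ w₁ z₂ w₂ : V,
      InteriorArc C ξa ξa' z₁ ∧ InteriorArc C ξb ξb' w₁ ∧ G.Adj z₁ w₁ ∧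
      InteriorArc C ξa ξa' z₂ ∧ InteriorArc C ξb ξb' w₂ ∧ G.Adj z₂ w₂ ∧
      z₁ ≠ z₂ ∧ w₁ ≠ w₂) :
    2 * P.length + 8 ≤ arcLen C ξa ξa' + arcLen C ξb ξb' := by
  classical
  obtain ⟨z₁, w₁, z₂, w₂, hz₁, hw₁, he₁, hz₂, hw₂, he₂, hz12, hw12⟩ := hindep
  have haN := ha.1
  have ha'N := ha.2.1
  have hbN := hb.1
  have hb'N := hb.2.1
  have hane : ξa ≠ ξa' := ha.2.2.1
  have hbne : ξb ≠ ξb' := hb.2.2.1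
  have hintA := ha.2.2.2
  have hintB := hb.2.2.2
  have haC : ξa ∈ C.support := haN.1
  have ha'C : ξa' ∈ C.support := ha'N.1
  have hbC : ξb ∈ C.support := hbN.1
  have hb'C : ξb' ∈ C.support := hb'N.1
  have hxa : G.Adj x ξa := haN.2
  have hxa' : G.Adj x ξa' := ha'N.2
  have hxb : G.Adj x ξb := hbN.2
  have hxb' : G.Adj x ξb' := hb'N.2
  have hya : G.Adj y ξa := (hN ▸ haN : ξa ∈ nbrsOn G C.support y).2
  have hyb : G.Adj y ξb := (hN ▸ hbN : ξb ∈ nbrsOn G C.support y).2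
  have hPp := hP.1
  have hPoff := hP.2.1
  have hCcyc := hC.1
  have hCnd : C.support.tail.Nodup := hCcyc.support_nodup
  have hClen0 : C.length ≠ 0 := fun h0 => hCcyc.not_nil (Walk.nil_iff_length_eq.2 h0)
  have hC1cyc := hCcyc.rotate haC
  have hC1len0 : (C.rotate ξa haC).length ≠ 0 := by rw [length_rotate']; exact hClen0
  have ha'C1 : ξa' ∈ (C.rotate ξa haC).support := (mem_support_rotate_iff C haC hClen0).2 ha'C
  set C₁ := C.rotate ξa haC with hC₁def
  set A := C₁.takeUntil ξa' ha'C1 with hAdef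
  set R := C₁.dropUntil ξa' ha'C1 with hRdef
  have hARspec : A.append R = C₁ := Walk.take_spec C₁ ha'C1
  have hArcA : arcSupport C ξa ξa' = A.support := by
    rw [arcSupport, dif_pos ⟨haC, ha'C1⟩]
  have hLenA : arcLen C ξa ξa' = A.length := by
    rw [arcLen, dif_pos ⟨haC, ha'C1⟩]
  -- ξb on the rest of the cycle
  have hbC1 : ξb ∈ C₁.support := (mem_support_rotate_iff C haC hClen0).2 hbC
  have hbR : ξb ∈ R.support := by
    rcases eq_or_ne ξb ξa' with heq | hne
    · rw [heq]; exact R.start_mem_support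
    · have hnotin : ξb ∉ A.support := by
        intro hmem
        exact hintA ξb (by rw [hArcA]; exact hmem) (Ne.symm hab) hne hbN
      have h2 := hbC1
      rw [← hARspec, Walk.mem_support_append_iff] at h2
      exact h2.resolve_left hnotin
  set Mw := R.takeUntil ξb hbR with hMdef
  set S := R.dropUntil ξb hbR with hSdef
  have hMS : Mw.append S = R := Walk.take_spec R hbR
  have hC1eq : (A.append Mw).append S = C₁ := by
    rw [← Walk.append_assoc, hMS, hARspec]
  have hnd1 : C₁.support.tail.Nodup := hC1cyc.support_nodup
  have htail1 : C₁.support.tail = (A.append Mw).support.tail ++ S.support.tail := by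
    conv_lhs => rw [← hC1eq]
    rw [Walk.tail_support_append]
  have hndAMS := hnd1
  rw [htail1] at hndAMS
  obtain ⟨ndAM, ndS, dAMS⟩ := List.nodup_append'.1 hndAMS
  have hbAMtl : ξb ∈ (A.append Mw).support.tail :=
    Walk.end_mem_tail_support_of_ne hab (A.append Mw)
  have hAMnd : (A.append Mw).support.Nodup := by
    rw [Walk.support_eq_cons]
    refine List.nodup_cons.2 ⟨?_, ndAM⟩
    intro hmem
    exact dAMS hmem (Walk.end_mem_tail_support_of_ne (Ne.symm hab) S)
  have hCL1 : C₁.dropUntil ξb hbC1 = S := by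
    rw [dropUntil_congr hC1eq.symm hbC1, dropUntil_append_end _ _ hAMnd]
  have hCL2 : C₁.takeUntil ξb hbC1 = A.append Mw := by
    rw [takeUntil_congr hC1eq.symm hbC1, takeUntil_append_end _ _ hAMnd]
  have hC2eq : C₁.rotate ξb hbC1 = S.append (A.append Mw) := by
    have hrot : C₁.rotate ξb hbC1 = (C₁.dropUntil ξb hbC1).append (C₁.takeUntil ξb hbC1) := rfl
    rw [hrot, hCL1, hCL2]
  have hrr : C₁.rotate ξb hbC1 = C.rotate ξb hbC := rotate_rotate hCnd haC hbC hbC1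
  have hb'C1 : ξb' ∈ C₁.support := (mem_support_rotate_iff C haC hClen0).2 hb'C
  have hb'C2 : ξb' ∈ (C₁.rotate ξb hbC1).support :=
    (mem_support_rotate_iff C₁ hbC1 hC1len0).2 hb'C1
  have hb'rotb : ξb' ∈ (C.rotate ξb hbC).support := by rw [← hrr]; exact hb'C2
  have hArcBraw : arcSupport C ξb ξb' = ((C.rotate ξb hbC).takeUntil ξb' hb'rotb).support := by
    rw [arcSupport, dif_pos ⟨hbC, hb'rotb⟩]
  have hLenBraw : arcLen C ξb ξb' = ((C.rotate ξb hbC).takeUntil ξb' hb'rotb).length := by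
    rw [arcLen, dif_pos ⟨hbC, hb'rotb⟩]
  have hb'S : ξb' ∈ S.support := by
    by_contra hns
    have hb'AM : ξb' ∈ (S.append (A.append Mw)).support := by rw [← hC2eq]; exact hb'C2
    have hb'AM2 : ξb' ∈ (A.append Mw).support := by
      rcases (Walk.mem_support_append_iff _ _).1 hb'AM with h | h
      · exact absurd h hns
      · exact h
    have h1 : (C.rotate ξb hbC).takeUntil ξb' hb'rotb
        = (C₁.rotate ξb hbC1).takeUntil ξb' hb'C2 := (takeUntil_congr hrr hb'C2).symm
    have h2 := takeUntil_congr hC2eq hb'C2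
    have h3 := takeUntil_append_right S (A.append Mw) hns hb'AM2 (hC2eq ▸ hb'C2)
    have htakeb' : (C.rotate ξb hbC).takeUntil ξb' hb'rotb
        = S.append ((A.append Mw).takeUntil ξb' hb'AM2) := h1.trans (h2.trans h3)
    have hamem : ξa ∈ arcSupport C ξb ξb' := by
      rw [hArcBraw, htakeb', Walk.mem_support_append_iff]
      exact Or.inl S.end_mem_support
    have hanb' : ξa ≠ ξb' := fun heq => hns (heq ▸ S.end_mem_support)
    exact hintB ξa hamem hab hanb' haN
  set B := S.takeUntil ξb' hb'S with hBdef
  set Ow := S.dropUntil ξb' hb'S with hOwdef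
  have hBOw : B.append Ow = S := Walk.take_spec S hb'S
  have hBeq : (C.rotate ξb hbC).takeUntil ξb' hb'rotb = B :=
    ((takeUntil_congr hrr hb'C2).symm).trans
      ((takeUntil_congr hC2eq hb'C2).trans (takeUntil_append_left S (A.append Mw) hb'S _))
  have hArcB : arcSupport C ξb ξb' = B.support := by
    rw [hArcBraw]; exact congrArg Walk.support hBeq
  have hLenB : arcLen C ξb ξb' = B.length := by
    rw [hLenBraw]; exact congrArg Walk.length hBeq
  have hrot1 : A.append (Mw.append (B.append Ow)) = C₁ := by
    rw [hBOw, hMS, hARspec]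
  have hrot2 : B.append (Ow.append (A.append Mw)) = C.rotate ξb hbC := by
    rw [Walk.append_assoc, hBOw, ← hC2eq, hrr]
  -- paths
  have hndS : S.support.Nodup := by
    rw [Walk.support_eq_cons]
    exact List.nodup_cons.2 ⟨fun h => dAMS hbAMtl h, ndS⟩
  have hSpath : S.IsPath := Walk.IsPath.mk' hndS
  have hBpath : B.IsPath := hSpath.takeUntil hb'S
  have hApath : A.IsPath := by
    apply Walk.IsPath.mk'
    have hAM2 := hAMnd
    rw [Walk.support_append] at hAM2
    exact hAM2.of_append_left
  -- interior data
  obtain ⟨hz₁arc, hz₁a, hz₁a'⟩ := hz₁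
  obtain ⟨hz₂arc, hz₂a, hz₂a'⟩ := hz₂
  obtain ⟨hw₁arc, hw₁b, hw₁b'⟩ := hw₁
  obtain ⟨hw₂arc, hw₂b, hw₂b'⟩ := hw₂
  have hz₁A : z₁ ∈ A.support := by rw [← hArcA]; exact hz₁arc
  have hz₂A : z₂ ∈ A.support := by rw [← hArcA]; exact hz₂arc
  have hw₁B : w₁ ∈ B.support := by rw [← hArcB]; exact hw₁arc
  have hw₂B : w₂ ∈ B.support := by rw [← hArcB]; exact hw₂arc
  -- the core double-application of build_ineq
  have core : ∀ (zf zs wf ws : V) (hzfA : zf ∈ A.support), zf ≠ ξa → zf ≠ ξa' →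
      zs ≠ ξa' →
      ∀ (hzord : zs ∈ (A.dropUntil zf hzfA).support), zf ≠ zs →
      ∀ (hwfB : wf ∈ B.support), wf ≠ ξb → wf ≠ ξb' →
      ws ≠ ξb' →
      ∀ (hword : ws ∈ (B.dropUntil wf hwfB).support), wf ≠ ws →
      ((G.Adj zf wf ∧ G.Adj zs ws) ∨ (G.Adj zf ws ∧ G.Adj zs wf)) →
      2 * P.length + 8 ≤ A.length + B.length := by
    intro zf zs wf ws hzfA hzfa hzfa' hzsa' hzord hzfs hwfB hwfb hwfb' hwsb' hword hwfs hmatch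
    set AmidW := (A.dropUntil zf hzfA).takeUntil zs hzord with hAmidWdef
    set BMW := (B.dropUntil wf hwfB).takeUntil ws hword with hBMWdef
    have hAmidp : AmidW.IsPath := (hApath.dropUntil hzfA).takeUntil hzord
    have hBMWp : BMW.IsPath := (hBpath.dropUntil hwfB).takeUntil hword
    have hAmidsub : ∀ t ∈ AmidW.support, t ∈ A.support := fun t ht =>
      Walk.support_dropUntil_subset A hzfA (Walk.support_takeUntil_subset _ hzord ht)
    have hBMWsub : ∀ t ∈ BMW.support, t ∈ B.support := fun t ht =>
      Walk.support_dropUntil_subset B hwfB (Walk.support_takeUntil_subset _ hword ht)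
    have hAmidnoa : ξa ∉ AmidW.support := fun h =>
      start_not_mem_dropUntil_of_ne hApath hzfA hzfa
        (Walk.support_takeUntil_subset _ hzord h)
    have hAmidnoa' : ξa' ∉ AmidW.support := fun h =>
      end_not_mem_takeUntil_of_ne (hApath.dropUntil hzfA) hzord hzsa' h
    have hBMWnob : ξb ∉ BMW.support := fun h =>
      start_not_mem_dropUntil_of_ne hBpath hwfB hwfb
        (Walk.support_takeUntil_subset _ hword h)
    have hBMWnob' : ξb' ∉ BMW.support := fun h =>
      end_not_mem_takeUntil_of_ne (hBpath.dropUntil hwfB) hword hwsb' h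
    rcases hmatch with ⟨hA1, hA2⟩ | ⟨hX1, hX2⟩
    · have I1 := build_ineq hC hPp hPoff hxa' hya A Mw B Ow hane hbne
        ⟨haC, hrot1.trans hC₁def⟩ hwfB hwfb hwfb' hword hwfs hwsb'
        AmidW hAmidp hAmidsub hAmidnoa hAmidnoa' hA1.symm hA2
      have I2 := build_ineq hC hPp hPoff hxb' hyb B Ow A Mw hbne hane
        ⟨hbC, hrot2⟩ hzfA hzfa hzfa' hzord hzfs hzsa'
        BMW hBMWp hBMWsub hBMWnob hBMWnob' hA1 hA2.symm
      have e1 : ((A.dropUntil zf hzfA).takeUntil zs hzord).length = AmidW.length := rfl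
      have e2 : ((B.dropUntil wf hwfB).takeUntil ws hword).length = BMW.length := rfl
      omega
    · have hAmidrp : AmidW.reverse.IsPath := hAmidp.reverse
      have hBMWrp : BMW.reverse.IsPath := hBMWp.reverse
      have hAmidrsub : ∀ t ∈ AmidW.reverse.support, t ∈ A.support := fun t ht =>
        hAmidsub t (by rwa [Walk.support_reverse, List.mem_reverse] at ht)
      have hBMWrsub : ∀ t ∈ BMW.reverse.support, t ∈ B.support := fun t ht =>
        hBMWsub t (by rwa [Walk.support_reverse, List.mem_reverse] at ht)
      have hAmidrnoa : ξa ∉ AmidW.reverse.support := fun h =>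
        hAmidnoa (by rwa [Walk.support_reverse, List.mem_reverse] at h)
      have hAmidrnoa' : ξa' ∉ AmidW.reverse.support := fun h =>
        hAmidnoa' (by rwa [Walk.support_reverse, List.mem_reverse] at h)
      have hBMWrnob : ξb ∉ BMW.reverse.support := fun h =>
        hBMWnob (by rwa [Walk.support_reverse, List.mem_reverse] at h)
      have hBMWrnob' : ξb' ∉ BMW.reverse.support := fun h =>
        hBMWnob' (by rwa [Walk.support_reverse, List.mem_reverse] at h)
      have I1 := build_ineq hC hPp hPoff hxa' hya A Mw B Ow hane hbne
        ⟨haC, hrot1.trans hC₁def⟩ hwfB hwfb hwfb' hword hwfs hwsb'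
        AmidW.reverse hAmidrp hAmidrsub hAmidrnoa hAmidrnoa' hX2.symm hX1
      have I2 := build_ineq hC hPp hPoff hxb' hyb B Ow A Mw hbne hane
        ⟨hbC, hrot2⟩ hzfA hzfa hzfa' hzord hzfs hzsa'
        BMW.reverse hBMWrp hBMWrsub hBMWrnob hBMWrnob' hX1 hX2.symm
      have e1 : AmidW.reverse.length = AmidW.length := Walk.length_reverse _
      have e2 : BMW.reverse.length = BMW.length := Walk.length_reverse _
      have e3 : ((A.dropUntil zf hzfA).takeUntil zs hzord).length = AmidW.length := rfl
      have e4 : ((B.dropUntil wf hwfB).takeUntil ws hword).length = BMW.length := rfl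
      omega
  rw [hLenA, hLenB]
  rcases before_or hApath hz₁A hz₂A with hzo | hzo <;>
    rcases before_or hBpath hw₁B hw₂B with hwo | hwo
  · exact core z₁ z₂ w₁ w₂ hz₁A hz₁a hz₁a' hz₂a' hzo hz12 hw₁B hw₁b hw₁b' hw₂b' hwo hw12
      (Or.inl ⟨he₁, he₂⟩)
  · exact core z₁ z₂ w₂ w₁ hz₁A hz₁a hz₁a' hz₂a' hzo hz12 hw₂B hw₂b hw₂b' hw₁b' hwo
      (Ne.symm hw12) (Or.inr ⟨he₁, he₂⟩)
  · exact core z₂ z₁ w₁ w₂ hz₂A hz₂a hz₂a' hz₁a' hzo (Ne.symm hz12) hw₁B hw₁b hw₁b' hw₂b'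
      hwo hw12 (Or.inr ⟨he₂, he₁⟩)
  · exact core z₂ z₁ w₂ w₁ hz₂A hz₂a hz₂a' hz₁a' hzo (Ne.symm hz12) hw₂B hw₂b hw₂b' hw₁b'
      hwo (Ne.symm hw12) (Or.inl ⟨he₂, he₁⟩)

end ToughPaper
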